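/- arXiv:2307.07248 — 6 statements merged into one kernel-verified Lean document; each statement's English description precedes it below -/
import Mathlib

section
/- Consider a sequence of random trials {X_t} with values in {ω1, ω2, ω3} and stopping time T = min{t : X_t ≠ ω3}. For each t let p_t = Pr[X_t = ω1 | C_t] and q_t = Pr[X_t = ω2 | C_t], where C_t is the event that all trials before t resulted in ω3. If there exist p > 0 and α > 0 such that p_t + q_t ≥ p and q_t/p_t < α for all t, then Pr[X_T = ω1] ≥ 1/(1 + α). -/
open MeasureTheory ENNReal

/-- The event that all trials before time `t` (with indices `1 ≤ τ < t`) resulted in ω3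
(encoded as `2 : Fin 3`). -/
def allEarlierOmega3 {Ω : Type*} (X : ℕ → Ω → Fin 3) (t : ℕ) : Set Ω :=
  {ω | ∀ τ, 1 ≤ τ → τ < t → X τ ω = 2}

theorem stmt6 {Ω : Type*} [MeasurableSpace Ω] (μ : Measure Ω) [IsProbabilityMeasure μ]
    (X : ℕ → Ω → Fin 3) (hX : ∀ t, Measurable (X t))
    (T : Ω → ℕ) (hT : ∀ ω, T ω = sInf {t | 1 ≤ t ∧ X t ω ≠ 2})
    (hTfin : ∀ᵐ ω ∂μ, ∃ t, 1 ≤ t ∧ X t ω ≠ 2)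
    (p α : ℝ) (hp : 0 < p) (hα : 0 < α)
    (h : ∀ t, 1 ≤ t → μ (allEarlierOmega3 X t) ≠ 0 →
      ENNReal.ofReal p * μ (allEarlierOmega3 X t) ≤
          μ ({ω | X t ω = 0} ∩ allEarlierOmega3 X t) +
            μ ({ω | X t ω = 1} ∩ allEarlierOmega3 X t) ∧
        μ ({ω | X t ω = 1} ∩ allEarlierOmega3 X t) <
          ENNReal.ofReal α * μ ({ω | X t ω = 0} ∩ allEarlierOmega3 X t)) :
    ENNReal.ofReal (1 / (1 + α)) ≤ μ {ω | X (T ω) ω = 0} := by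
  classical
  set A : ℕ → Set Ω := fun t => {ω | X (t+1) ω = 0} ∩ allEarlierOmega3 X (t+1) with hA
  set B : ℕ → Set Ω := fun t => {ω | X (t+1) ω = 1} ∩ allEarlierOmega3 X (t+1) with hB
  have measC : ∀ t, MeasurableSet (allEarlierOmega3 X t) := by
    intro t
    have : allEarlierOmega3 X t =
        ⋂ (τ : ℕ) (_ : 1 ≤ τ) (_ : τ < t), {ω | X τ ω = 2} := by
      ext ω; simp [allEarlierOmega3]
    rw [this]
    exact MeasurableSet.iInter fun τ => MeasurableSet.iInter fun _ =>
      MeasurableSet.iInter fun _ => (hX τ) (measurableSet_singleton 2)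
  have measA : ∀ t, MeasurableSet (A t) := fun t =>
    ((hX (t+1)) (measurableSet_singleton 0)).inter (measC (t+1))
  have measB : ∀ t, MeasurableSet (B t) := fun t =>
    ((hX (t+1)) (measurableSet_singleton 1)).inter (measC (t+1))
  have hBA : ∀ t, μ (B t) ≤ ENNReal.ofReal α * μ (A t) := by
    intro t
    by_cases hC : μ (allEarlierOmega3 X (t+1)) = 0
    · have : μ (B t) = 0 :=
        le_antisymm (le_trans (measure_mono Set.inter_subset_right) hC.le) (zero_le)
      simp [this]
    · exact (h (t+1) (Nat.le_add_left 1 t) hC).2.le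
  -- a.e. ω is in ⋃ t, A t ∪ B t
  have hcover : (1 : ℝ≥0∞) ≤ μ (⋃ t, A t ∪ B t) := by
    have hae : ∀ᵐ ω ∂μ, ω ∈ ⋃ t, A t ∪ B t := by
      filter_upwards [hTfin] with ω ht
      have hne : {t | 1 ≤ t ∧ X t ω ≠ 2}.Nonempty := ht
      have hmem := Nat.sInf_mem hne
      simp only [Set.mem_setOf_eq] at hmem
      set t0 := sInf {t | 1 ≤ t ∧ X t ω ≠ 2} with ht0
      have hC : ω ∈ allEarlierOmega3 X t0 := by
        intro τ h1 h2
        by_contra hne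
        have hτ : τ ∈ {t | 1 ≤ t ∧ X t ω ≠ 2} := ⟨h1, hne⟩
        exact absurd (Nat.sInf_le hτ) (Nat.not_le.mpr h2)
      have hval : (X t0 ω).val = 0 ∨ (X t0 ω).val = 1 := by
        have h2 : (X t0 ω).val ≠ 2 := fun hv => hmem.2 (Fin.ext hv)
        have h3 := (X t0 ω).isLt
        omega
      have ht0' : t0 - 1 + 1 = t0 := by omega
      rcases hval with hv | hv
      · exact Set.mem_iUnion.mpr ⟨t0 - 1, Or.inl ⟨by rw [ht0']; exact Fin.ext hv,
          by rw [ht0']; exact hC⟩⟩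
      · exact Set.mem_iUnion.mpr ⟨t0 - 1, Or.inr ⟨by rw [ht0']; exact Fin.ext hv,
          by rw [ht0']; exact hC⟩⟩
    calc (1 : ℝ≥0∞) = μ Set.univ := (measure_univ).symm
      _ ≤ μ (⋃ t, A t ∪ B t) := measure_mono_ae (hae.mono fun ω hω _ => hω)
  -- disjointness of the A's
  have key : ∀ s t, s < t → Disjoint (A s) (A t) := by
    intro s t hlt
    refine Set.disjoint_left.mpr fun ω hs htm => ?_
    have h2 : X (s+1) ω = 2 := htm.2 (s+1) (by omega) (by omega)
    have h0 : X (s+1) ω = 0 := hs.1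
    rw [h0] at h2
    exact absurd h2 (by decide)
  have hdisj : Pairwise (Function.onFun Disjoint A) := fun s t hst =>
    (lt_or_gt_of_ne hst).elim (fun hl => key s t hl) (fun hl => (key t s hl).symm)
  -- ⋃ A ⊆ {X_T = 0}
  have hsub : (⋃ t, A t) ⊆ {ω | X (T ω) ω = 0} := by
    rintro ω hω
    obtain ⟨t, hω⟩ := Set.mem_iUnion.mp hω
    have hX0 : X (t+1) ω = 0 := hω.1
    have hTω : T ω = t + 1 := by
      rw [hT]
      refine le_antisymm (Nat.sInf_le ⟨Nat.le_add_left 1 t, by rw [hX0]; decide⟩) ?_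
      by_contra hc
      push_neg at hc
      have hne : {s | 1 ≤ s ∧ X s ω ≠ 2}.Nonempty :=
        ⟨t+1, Nat.le_add_left 1 t, by rw [hX0]; decide⟩
      have hmem := Nat.sInf_mem hne
      simp only [Set.mem_setOf_eq] at hmem
      exact hmem.2 (hω.2 _ hmem.1 hc)
    show X (T ω) ω = 0
    rw [hTω]; exact hX0
  have hsumA : ∑' t, μ (A t) ≤ μ {ω | X (T ω) ω = 0} := by
    rw [← measure_iUnion hdisj measA]
    exact measure_mono hsub
  have hone : (1 : ℝ≥0∞) ≤ (1 + ENNReal.ofReal α) * ∑' t, μ (A t) := by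
    calc (1 : ℝ≥0∞) ≤ μ (⋃ t, A t ∪ B t) := hcover
      _ ≤ ∑' t, μ (A t ∪ B t) := measure_iUnion_le _
      _ ≤ ∑' t, (μ (A t) + μ (B t)) := ENNReal.tsum_le_tsum fun t => measure_union_le _ _
      _ = (∑' t, μ (A t)) + ∑' t, μ (B t) := ENNReal.tsum_add
      _ ≤ (∑' t, μ (A t)) + ∑' t, ENNReal.ofReal α * μ (A t) :=
          add_le_add_right (ENNReal.tsum_le_tsum hBA) _
      _ = (∑' t, μ (A t)) + ENNReal.ofReal α * ∑' t, μ (A t) := by rw [ENNReal.tsum_mul_left]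
      _ = (1 + ENNReal.ofReal α) * ∑' t, μ (A t) := by ring
  have hofReal : ENNReal.ofReal (1 / (1 + α)) = 1 / (1 + ENNReal.ofReal α) := by
    rw [ENNReal.ofReal_div_of_pos (by linarith), ENNReal.ofReal_add zero_le_one hα.le,
      ENNReal.ofReal_one]
  rw [hofReal]
  refine le_trans ?_ hsumA
  rw [ENNReal.div_le_iff (by simp) (ENNReal.add_ne_top.mpr ⟨one_ne_top, ofReal_ne_top⟩)]
  rw [mul_comm]
  exact hone
end

section
/- Let n ≥ 5 be odd and let P = (x_0,...,x_n) be an almost balanced population (x_i has i ones; one hot position with (n+3)/2 ones, one cold position with (n-1)/2 ones, all other positions with (n+1)/2 ones). Call a balanced position k a cold-candidate if at least n/16 of the individuals with a zero-bit in the cold position have a one-bit at position k. Then there are at least n/8 cold-candidate positions. -/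
/-- Hamming distance between two bit strings. -/
def hamming {n : ℕ} (x y : Fin n → Bool) : ℕ :=
  (Finset.univ.filter (fun k => x k ≠ y k)).card

/-- Total Hamming distance of a population: sum over all pairs i < j. -/
def totalHamming {m n : ℕ} (P : Fin m → Fin n → Bool) : ℕ :=
  ∑ p ∈ Finset.univ.filter (fun p : Fin m × Fin m => p.1 < p.2), hamming (P p.1) (P p.2)

/-- Number of one-bits of a bit string. -/
def onesCount {n : ℕ} (x : Fin n → Bool) : ℕ :=
  (Finset.univ.filter (fun k => x k = true)).card

/-- Number of individuals with a one-bit at position k. -/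
def colCount {m n : ℕ} (P : Fin m → Fin n → Bool) (k : Fin n) : ℕ :=
  (Finset.univ.filter (fun i => P i k = true)).card

lemma sum_distinct_ge (t : Finset ℕ) : t.card * (t.card - 1) ≤ 2 * ∑ i ∈ t, i := by
  induction t using Finset.strongInduction with
  | _ t ih =>
    rcases t.eq_empty_or_nonempty with rfl | ht
    · simp
    · set M := t.max' ht with hM
      have hmem : M ∈ t := t.max'_mem ht
      have hcard : t.card ≤ M + 1 := by
        have : t ⊆ Finset.range (M + 1) := fun a ha =>
          Finset.mem_range.2 (Nat.lt_succ_of_le (t.le_max' a ha))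
        simpa using Finset.card_le_card this
      have hsum : ∑ i ∈ t, i = M + ∑ i ∈ t.erase M, i :=
        (Finset.add_sum_erase t id hmem).symm
      have hih := ih (t.erase M) (Finset.erase_ssubset hmem)
      have hc : (t.erase M).card = t.card - 1 := Finset.card_erase_of_mem hmem
      rw [hc] at hih
      have hpos : 1 ≤ t.card := Finset.card_pos.2 ht
      obtain ⟨j, hj⟩ : ∃ j, t.card = j + 1 := ⟨t.card - 1, by omega⟩
      rw [hj] at hih hcard ⊢
      have hjM : j ≤ M := by omega
      have hdec : (j + 1) * ((j+1) - 1) = j * (j - 1) + 2 * j := by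
        cases j with
        | zero => rfl
        | succ i => simp [Nat.succ_sub_one]; ring
      rw [hsum, hdec]
      simp only [Nat.succ_sub_one] at hih
      linarith

lemma arith_key (m q s : ℕ) (hm2 : 2 ≤ m)
    (hsumB : 16 * s ≤ (2*m - 1) * (2*m) + 16 * (q * (m + 1)))
    (hmain : (m + 2) * (m + 1) ≤ 2 * ((m + 2) + s)) : 2 * m + 1 ≤ 8 * q := by
  have hb : (2 * m - 1) * (2 * m) + 2 * m = (2 * m) * (2 * m) := by
    have h21 : 2 * m - 1 + 1 = 2 * m := by omega
    calc (2*m-1)*(2*m) + 2*m = ((2*m-1)+1) * (2*m) := by ring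
      _ = (2*m)*(2*m) := by rw [h21]
  have hM2 : 2 * m ≤ m * m := Nat.mul_le_mul_right m hm2
  have hq1 : 1 ≤ q := by
    by_contra hq0
    have hq0' : q = 0 := by omega
    rw [hq0'] at hsumB
    nlinarith [hmain, hsumB, hb, hM2]
  rcases le_or_gt m 3 with hm3 | hm4
  · omega
  · by_contra hlt
    have h8q : 16 * q ≤ 4 * m := by omega
    have hh1 : (16 * q) * (m + 1) ≤ (4 * m) * (m + 1) :=
      Nat.mul_le_mul_right _ h8q
    nlinarith [hmain, hsumB, hb, hM2, hh1]


theorem stmt12 (n : ℕ) (hn : Odd n) (hn5 : 5 ≤ n) (x : Fin (n + 1) → Fin n → Bool)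
    (hlevels : ∀ i : Fin (n + 1), onesCount (x i) = i)
    (hot cold : Fin n) (hne : hot ≠ cold)
    (hhot : colCount x hot = (n + 3) / 2) (hcold : colCount x cold = (n - 1) / 2)
    (hbal : ∀ k : Fin n, k ≠ hot → k ≠ cold → colCount x k = (n + 1) / 2) :
    (n : ℝ) / 8 ≤
      ((Finset.univ.filter (fun k : Fin n => k ≠ hot ∧ k ≠ cold ∧
        (n : ℝ) / 16 ≤
          ((Finset.univ.filter
            (fun i : Fin (n + 1) => x i cold = false ∧ x i k = true)).card : ℝ))).card : ℝ) := by
  obtain ⟨m, hm⟩ := hn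
  subst hm
  have hm2 : 2 ≤ m := by omega
  set Z : Finset (Fin (2*m+1+1)) := Finset.univ.filter (fun i => x i cold = false) with hZ
  -- card of Z
  have hZcard : Z.card = m + 2 := by
    have h := Finset.card_filter_add_card_filter_not
      (s := (Finset.univ : Finset (Fin (2*m+1+1)))) (p := fun i => x i cold = true)
    have he : Finset.univ.filter (fun i : Fin (2*m+1+1) => ¬ (x i cold = true)) = Z := by
      apply Finset.filter_congr; intro i _; simp
    rw [he] at h
    have hcc : (Finset.univ.filter (fun i : Fin (2*m+1+1) => x i cold = true)).card
        = (2*m+1-1)/2 := hcold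
    simp only [Finset.card_univ, Fintype.card_fin] at h
    omega
  -- lower bound on sum of indices in Z
  have hlow : (m + 2) * (m + 1) ≤ 2 * ∑ i ∈ Z, (i : ℕ) := by
    have := sum_distinct_ge (Z.map ⟨Fin.val, Fin.val_injective⟩)
    rw [Finset.card_map, Finset.sum_map, hZcard] at this
    simpa using this
  -- column counts restricted to Z
  set c : Fin (2*m+1) → ℕ := fun k => (Z.filter (fun i => x i k = true)).card with hc
  have hswap : ∑ i ∈ Z, onesCount (x i) = ∑ k : Fin (2*m+1), c k := by
    simp only [onesCount, hc, Finset.card_filter]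
    exact Finset.sum_comm
  have hsum_eq : ∑ i ∈ Z, (i : ℕ) = ∑ k : Fin (2*m+1), c k := by
    rw [← hswap]; exact Finset.sum_congr rfl (fun i _ => (hlevels i).symm)
  -- relate c to the cards in the statement
  have hcform : ∀ k : Fin (2*m+1),
      c k = (Finset.univ.filter
        (fun i : Fin (2*m+1+1) => x i cold = false ∧ x i k = true)).card := by
    intro k
    simp only [hc, hZ, Finset.filter_filter]
  -- splitting positions
  set B : Finset (Fin (2*m+1)) := Finset.univ.filter (fun k => k ≠ hot ∧ k ≠ cold) with hB
  have hBsd : B = Finset.univ \ {hot, cold} := by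
    ext k; simp [hB]
  have hBcard : B.card = 2 * m - 1 := by
    rw [hBsd, Finset.card_sdiff_of_subset (Finset.subset_univ _), Finset.card_pair hne]
    simp
  have hsplit : ∑ k : Fin (2*m+1), c k = c hot + c cold + ∑ k ∈ B, c k := by
    rw [hBsd, ← Finset.sum_sdiff (Finset.subset_univ ({hot, cold} : Finset (Fin (2*m+1)))),
      Finset.sum_pair hne]
    ring
  have hccold : c cold = 0 := by
    simp only [hc, Finset.card_eq_zero]
    apply Finset.filter_false_of_mem
    intro i hi
    simp only [hZ, Finset.mem_filter] at hi
    simp [hi.2]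
  have hchot : c hot ≤ m + 2 := by
    rw [← hZcard]; exact Finset.card_filter_le _ _
  -- per-position upper bounds on B
  have hcbal : ∀ k ∈ B, c k ≤ m + 1 := by
    intro k hk
    simp only [hB, Finset.mem_filter] at hk
    have h1 : c k ≤ colCount x k := by
      simp only [hc, colCount]
      apply Finset.card_le_card
      intro i hi
      simp only [hZ, Finset.mem_filter] at hi ⊢
      exact ⟨Finset.mem_univ _, hi.2⟩
    have h2 := hbal k hk.2.1 hk.2.2
    omega
  -- candidate set
  set C : Finset (Fin (2*m+1)) := Finset.univ.filter (fun k : Fin (2*m+1) => k ≠ hot ∧ k ≠ cold ∧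
      ((2*m+1 : ℕ) : ℝ) / 16 ≤ ((Finset.univ.filter
        (fun i : Fin (2*m+1+1) => x i cold = false ∧ x i k = true)).card : ℝ)) with hC
  have hCB : C ⊆ B := by
    intro k hk
    simp only [hC, hB, Finset.mem_filter] at hk ⊢
    exact ⟨hk.1, hk.2.1, hk.2.2.1⟩
  set q := C.card with hq
  -- non-candidates have small counts
  have hnon : ∀ k ∈ B \ C, 16 * c k ≤ 2 * m := by
    intro k hk
    rw [Finset.mem_sdiff] at hk
    obtain ⟨hkB, hkC⟩ := hk
    simp only [hB, Finset.mem_filter] at hkB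
    simp only [hC, Finset.mem_filter] at hkC
    have hnle : ¬ (((2*m+1 : ℕ) : ℝ) / 16 ≤ ((Finset.univ.filter
        (fun i : Fin (2*m+1+1) => x i cold = false ∧ x i k = true)).card : ℝ)) := by
      tauto
    rw [not_le, ← hcform k] at hnle
    have hlt : 16 * (c k : ℝ) < ((2*m+1 : ℕ) : ℝ) := by linarith
    have h16 : 16 * c k < 2*m+1 := by exact_mod_cast hlt
    omega
  -- sum over B bound
  have hsdC : ∑ k ∈ B, c k = ∑ k ∈ B \ C, c k + ∑ k ∈ C, c k := (Finset.sum_sdiff hCB).symm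
  have h1 : ∑ k ∈ C, c k ≤ q * (m + 1) := by
    calc ∑ k ∈ C, c k ≤ ∑ _k ∈ C, (m + 1) :=
          Finset.sum_le_sum (fun k hk => hcbal k (hCB hk))
      _ = q * (m + 1) := by rw [Finset.sum_const, smul_eq_mul]
  have h2 : 16 * ∑ k ∈ B \ C, c k ≤ (2*m - 1) * (2 * m) := by
    rw [Finset.mul_sum]
    calc ∑ k ∈ B \ C, 16 * c k ≤ ∑ _k ∈ B \ C, 2 * m := Finset.sum_le_sum hnon
      _ = (B \ C).card * (2 * m) := by rw [Finset.sum_const, smul_eq_mul]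
      _ ≤ (2*m - 1) * (2*m) := by
          apply Nat.mul_le_mul_right
          rw [← hBcard]; exact Finset.card_le_card Finset.sdiff_subset
  have hsumB : 16 * ∑ k ∈ B, c k ≤ (2*m - 1) * (2*m) + 16 * (q * (m + 1)) := by
    rw [hsdC, Nat.mul_add]
    exact Nat.add_le_add h2 (Nat.mul_le_mul_left _ h1)
  -- main numeric inequality
  have hmain : (m + 2) * (m + 1) ≤ 2 * ((m + 2) + ∑ k ∈ B, c k) := by
    have hlow' := hlow
    rw [hsum_eq, hsplit, hccold] at hlow'
    omega
  have hgoal : 2 * m + 1 ≤ 8 * q := arith_key m q (∑ k ∈ B, c k) hm2 hsumB hmain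
  -- finish
  rw [show ((2*m+1 : ℕ) : ℝ) = 2 * (m:ℝ) + 1 by push_cast; ring]
  have hqr : (2 * (m:ℝ) + 1) ≤ 8 * (q:ℝ) := by exact_mod_cast hgoal
  linarith
end

section
/- Let n ≥ 5 be odd and let P = (x_0,...,x_n) be an almost balanced population as above. Call a balanced position k a hot-candidate if at least n/16 of the individuals with a one-bit in the hot position have a zero-bit at position k. Then there are at least n/8 hot-candidate positions. -/
lemma sum_range_card_le (U : Finset ℕ) : ∑ j ∈ Finset.range U.card, j ≤ ∑ u ∈ U, u := by
  induction U using Finset.strongInduction with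
  | _ U ih =>
    rcases U.eq_empty_or_nonempty with h | h
    · simp [h]
    · have hm : U.max' h ∈ U := U.max'_mem h
      have hsub : U ⊆ Finset.range (U.max' h + 1) := fun u hu =>
        Finset.mem_range.mpr (Nat.lt_succ_of_le (U.le_max' u hu))
      have hcard : U.card ≤ U.max' h + 1 := by
        simpa using Finset.card_le_card hsub
      have h1 := ih (U.erase (U.max' h)) (Finset.erase_ssubset hm)
      have h2 : (U.erase (U.max' h)).card = U.card - 1 := Finset.card_erase_of_mem hm
      have h3 : ∑ u ∈ U, u = U.max' h + ∑ u ∈ U.erase (U.max' h), u :=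
        (Finset.add_sum_erase _ _ hm).symm
      have hpos : 1 ≤ U.card := Finset.card_pos.mpr h
      have h4 : ∑ j ∈ Finset.range U.card, j = (U.card - 1) + ∑ j ∈ Finset.range (U.card - 1), j := by
        conv_lhs => rw [show U.card = (U.card - 1) + 1 by omega]
        rw [Finset.sum_range_succ]; omega
      rw [h2] at h1
      omega

set_option maxHeartbeats 1000000 in
theorem stmt13 (n : ℕ) (hn : Odd n) (hn5 : 5 ≤ n) (x : Fin (n + 1) → Fin n → Bool)
    (hlevels : ∀ i : Fin (n + 1), onesCount (x i) = i)
    (hot cold : Fin n) (hne : hot ≠ cold)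
    (hhot : colCount x hot = (n + 3) / 2) (hcold : colCount x cold = (n - 1) / 2)
    (hbal : ∀ k : Fin n, k ≠ hot → k ≠ cold → colCount x k = (n + 1) / 2) :
    (n : ℝ) / 8 ≤
      ((Finset.univ.filter (fun k : Fin n => k ≠ hot ∧ k ≠ cold ∧
        (n : ℝ) / 16 ≤
          ((Finset.univ.filter
            (fun i : Fin (n + 1) => x i hot = true ∧ x i k = false)).card : ℝ))).card : ℝ) := by
  classical
  obtain ⟨t, ht⟩ := hn
  have ht2 : 2 ≤ t := by omega
  -- basic objects
  set Z : Fin n → ℕ := fun k =>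
    (Finset.univ.filter (fun i : Fin (n + 1) => x i hot = true ∧ x i k = false)).card with hZdef
  set S : Finset (Fin (n + 1)) := Finset.univ.filter (fun i => x i hot = true) with hSdef
  have hScard : S.card = t + 2 := by
    have := hhot
    rw [colCount] at this
    rw [hSdef, this]; omega
  -- zeros count of each individual
  have hzeros : ∀ i : Fin (n + 1),
      (Finset.univ.filter (fun k => x i k = false)).card = n - i.val := by
    intro i
    have hsplit := Finset.card_filter_add_card_filter_not
      (s := (Finset.univ : Finset (Fin n))) (p := fun k => x i k = false)
    have hneg : (Finset.univ.filter (fun k => ¬ x i k = false)) =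
        (Finset.univ.filter (fun k => x i k = true)) := by
      apply Finset.filter_congr; intro k _; simp
    rw [hneg] at hsplit
    have h1 := hlevels i
    rw [onesCount] at h1
    have h2 : (Finset.univ : Finset (Fin n)).card = n := by simp
    have h3 : i.val ≤ n := by omega
    omega
  -- Z k as a sum over S
  have hZsum : ∀ k, Z k = ∑ i ∈ S, (if x i k = false then 1 else 0) := by
    intro k
    rw [hZdef]
    simp only
    rw [hSdef, ← Finset.filter_filter, Finset.card_filter]
  -- total sum of Z
  have hTot : ∑ k, Z k = ∑ i ∈ S, (n - i.val) := by
    calc ∑ k, Z k = ∑ k, ∑ i ∈ S, (if x i k = false then 1 else 0) := by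
          exact Finset.sum_congr rfl (fun k _ => hZsum k)
      _ = ∑ i ∈ S, ∑ k, (if x i k = false then 1 else 0) := Finset.sum_comm
      _ = ∑ i ∈ S, (n - i.val) := by
          refine Finset.sum_congr rfl (fun i _ => ?_)
          rw [← Finset.card_filter, hzeros]
  -- lower bound on total
  have hTotLB : (t + 2) * (t + 1) ≤ 2 * ∑ k, Z k := by
    have hinj : ∀ a ∈ S, ∀ b ∈ S, n - a.val = n - b.val → a = b := by
      intro a _ b _ hab
      have := a.isLt; have := b.isLt
      exact Fin.ext (by omega)
    have himg : ∑ u ∈ S.image (fun i => n - i.val), u = ∑ i ∈ S, (n - i.val) :=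
      Finset.sum_image hinj
    have hcardimg : (S.image (fun i => n - i.val)).card = t + 2 := by
      rw [Finset.card_image_of_injOn (fun a ha b hb => hinj a ha b hb), hScard]
    have hge := sum_range_card_le (S.image (fun i => n - i.val))
    rw [hcardimg, himg] at hge
    have hr : (∑ j ∈ Finset.range (t + 2), j) * 2 = (t + 2) * (t + 1) := by
      rw [Finset.sum_range_id_mul_two]
      rfl
    rw [hTot]
    omega
  -- Z hot = 0
  have hZhot : Z hot = 0 := by
    rw [hZdef]; simp
  -- Z cold ≤ t + 2
  have hZcold : Z cold ≤ t + 2 := by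
    rw [hZdef]
    simp only
    rw [← hScard, hSdef]
    apply Finset.card_le_card
    intro i hi
    simp only [Finset.mem_filter] at hi ⊢
    exact ⟨hi.1, hi.2.1⟩
  -- balanced positions
  set B : Finset (Fin n) := Finset.univ.filter (fun k => k ≠ hot ∧ k ≠ cold) with hBdef
  have hBcard : B.card = n - 2 := by
    have : B = Finset.univ \ {hot, cold} := by
      ext k; simp [hBdef]
    rw [this, Finset.card_sdiff_of_subset (by simp)]
    rw [Finset.card_insert_of_notMem (by simpa using hne)]
    simp
  have hZbal : ∀ k ∈ B, Z k ≤ t + 1 := by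
    intro k hk
    rw [hBdef] at hk
    simp only [Finset.mem_filter] at hk
    have hb := hbal k hk.2.1 hk.2.2
    rw [colCount] at hb
    have hsplit := Finset.card_filter_add_card_filter_not
      (s := (Finset.univ : Finset (Fin (n+1)))) (p := fun i => x i k = false)
    have hneg : (Finset.univ.filter (fun i : Fin (n+1) => ¬ x i k = false)) =
        (Finset.univ.filter (fun i : Fin (n+1) => x i k = true)) := by
      apply Finset.filter_congr; intro i _; simp
    rw [hneg, hb] at hsplit
    have hsub : Z k ≤ (Finset.univ.filter (fun i : Fin (n+1) => x i k = false)).card := by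
      rw [hZdef]
      apply Finset.card_le_card
      intro i hi
      simp only [Finset.mem_filter] at hi ⊢
      exact ⟨hi.1, hi.2.2⟩
    have h2 : (Finset.univ : Finset (Fin (n+1))).card = n + 1 := by simp
    omega
  -- decompose univ sum
  have hdecomp : ∑ k, Z k = Z hot + (Z cold + ∑ k ∈ B, Z k) := by
    have huniv : (Finset.univ : Finset (Fin n)) = insert hot (insert cold B) := by
      ext k
      simp only [Finset.mem_univ, Finset.mem_insert, hBdef, Finset.mem_filter, true_and,
        true_iff]
      tauto
    have hc1 : cold ∉ B := by simp [hBdef]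
    have hc2 : hot ∉ insert cold B := by
      simp [hBdef, hne]
    rw [huniv, Finset.sum_insert hc2, Finset.sum_insert hc1]
  have hBsum : (t + 2) * (t + 1) ≤ 2 * (t + 2) + 2 * ∑ k ∈ B, Z k := by
    rw [hdecomp, hZhot] at hTotLB
    omega
  -- the candidate set
  set C : Finset (Fin n) := Finset.univ.filter (fun k : Fin n => k ≠ hot ∧ k ≠ cold ∧
        (n : ℝ) / 16 ≤
          ((Finset.univ.filter
            (fun i : Fin (n + 1) => x i hot = true ∧ x i k = false)).card : ℝ)) with hCdef
  have hCB : C ⊆ B := by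
    intro k hk
    rw [hCdef] at hk
    simp only [Finset.mem_filter] at hk
    rw [hBdef]
    simp only [Finset.mem_filter]
    exact ⟨hk.1, hk.2.1, hk.2.2.1⟩
  have hsplitBC : ∑ k ∈ B \ C, Z k + ∑ k ∈ C, Z k = ∑ k ∈ B, Z k :=
    Finset.sum_sdiff hCB
  have hCsum : ∑ k ∈ C, Z k ≤ C.card * (t + 1) := by
    calc ∑ k ∈ C, Z k ≤ ∑ _k ∈ C, (t + 1) :=
          Finset.sum_le_sum (fun k hk => hZbal k (hCB hk))
      _ = C.card * (t + 1) := by rw [Finset.sum_const, smul_eq_mul]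
  -- non-candidates
  have hnc : ∀ k ∈ B \ C, ((Z k : ℝ)) < (n : ℝ) / 16 := by
    intro k hk
    rw [Finset.mem_sdiff] at hk
    obtain ⟨hkB, hkC⟩ := hk
    rw [hBdef] at hkB; simp only [Finset.mem_filter] at hkB
    rw [hCdef] at hkC
    simp only [Finset.mem_filter, Finset.mem_univ, true_and, not_and, not_le] at hkC
    exact hkC hkB.2.1 hkB.2.2
  show (n : ℝ) / 8 ≤ (C.card : ℝ)
  by_cases hsmall : n < 16
  · -- small case: non-candidates have Z k = 0
    have hzero : ∀ k ∈ B \ C, Z k = 0 := by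
      intro k hk
      have := hnc k hk
      have hlt : ((Z k : ℝ)) < 1 := lt_of_lt_of_le this (by
        rw [div_le_one (by norm_num)]
        exact_mod_cast (by omega : n ≤ 16))
      exact_mod_cast Nat.lt_one_iff.mp (by exact_mod_cast hlt)
    have hzsum : ∑ k ∈ B \ C, Z k = 0 := Finset.sum_eq_zero hzero
    have hkey : (t + 2) * (t + 1) ≤ 2 * (t + 2) + 2 * (C.card * (t + 1)) := by
      omega
    have hc : (0 : ℝ) ≤ (C.card : ℝ) := Nat.cast_nonneg _
    have hkeyR : ((t : ℝ) + 2) * ((t : ℝ) + 1) ≤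
        2 * ((t : ℝ) + 2) + 2 * ((C.card : ℝ) * ((t : ℝ) + 1)) := by exact_mod_cast hkey
    have htR : (2 : ℝ) ≤ (t : ℝ) := by exact_mod_cast ht2
    have hnR : (n : ℝ) = 2 * (t : ℝ) + 1 := by exact_mod_cast ht
    rw [hnR]
    nlinarith [hkeyR, htR, hc]
  · -- big case: n ≥ 16, i.e. t ≥ 8
    have ht8 : 8 ≤ t := by omega
    have hbound : ∀ k ∈ B \ C, 16 * Z k ≤ 2 * t := by
      intro k hk
      have h0 := hnc k hk
      have h16 : ((16 * Z k : ℕ) : ℝ) < (n : ℝ) := by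
        push_cast
        linarith
      have h17 : 16 * Z k < n := Nat.cast_lt.mp h16
      omega
    have hDsum : 16 * ∑ k ∈ B \ C, Z k ≤ (2 * t - 1) * (2 * t) := by
      calc 16 * ∑ k ∈ B \ C, Z k = ∑ k ∈ B \ C, 16 * Z k := by rw [Finset.mul_sum]
        _ ≤ ∑ _k ∈ B \ C, 2 * t := Finset.sum_le_sum hbound
        _ = (B \ C).card * (2 * t) := by rw [Finset.sum_const, smul_eq_mul]
        _ ≤ (2 * t - 1) * (2 * t) := by
            apply Nat.mul_le_mul_right
            have := Finset.card_le_card (Finset.sdiff_subset (s := B) (t := C))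
            omega
    have hkey : 8 * ((t + 2) * (t + 1)) ≤ 16 * (t + 2) + 16 * (C.card * (t + 1))
        + (2 * t - 1) * (2 * t) := by
      omega
    have hc : (0 : ℝ) ≤ (C.card : ℝ) := Nat.cast_nonneg _
    have hkeyR : 8 * (((t : ℝ) + 2) * ((t : ℝ) + 1)) ≤ 16 * ((t : ℝ) + 2)
        + 16 * ((C.card : ℝ) * ((t : ℝ) + 1)) + (2 * (t : ℝ) - 1) * (2 * (t : ℝ)) := by
      have h1 : ((2 * t - 1 : ℕ) : ℝ) = 2 * (t : ℝ) - 1 := by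
        rw [Nat.cast_sub (by omega : 1 ≤ 2 * t)]; push_cast; ring
      have h2 := (Nat.cast_le (α := ℝ)).mpr hkey
      push_cast [h1] at h2
      linarith [h2]
    have htR : (8 : ℝ) ≤ (t : ℝ) := by exact_mod_cast ht8
    have hnR : (n : ℝ) = 2 * (t : ℝ) + 1 := by exact_mod_cast ht
    rw [hnR]
    nlinarith [hkeyR, htR, hc]
end

section
/- In an almost balanced population P (n odd), if an individual x_i has a one-bit in the cold position and a zero-bit in the hot position, then replacing x_i by any other bit string with exactly i one-bits strictly decreases the total Hamming distance of the population. -/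
open Finset

lemma hamming_comm {n : ℕ} (x y : Fin n → Bool) : hamming x y = hamming y x := by
  unfold hamming
  congr 1
  apply filter_congr
  intro k _
  simp [ne_comm]

lemma hamming_self {n : ℕ} (x : Fin n → Bool) : hamming x x = 0 := by
  simp [hamming]

lemma sum_ordered {m n : ℕ} (P : Fin m → Fin n → Bool) :
    ∑ p : Fin m × Fin m, hamming (P p.1) (P p.2) = 2 * totalHamming P := by
  rw [two_mul, totalHamming]
  rw [← Finset.sum_filter_add_sum_filter_not univ (fun p : Fin m × Fin m => p.1 < p.2)]
  congr 1
  have h1 : ∑ p ∈ univ.filter (fun p : Fin m × Fin m => ¬ p.1 < p.2), hamming (P p.1) (P p.2)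
      = ∑ p ∈ univ.filter (fun p : Fin m × Fin m => p.2 < p.1), hamming (P p.1) (P p.2) := by
    symm
    apply Finset.sum_subset
    · intro p hp
      simp only [mem_filter, mem_univ, true_and] at *
      exact not_lt.mpr hp.le
    · intro p hp hp2
      simp only [mem_filter, mem_univ, true_and] at *
      have : p.1 = p.2 := le_antisymm (not_lt.mp hp2) (not_lt.mp hp)
      rw [this, hamming_self]
  rw [h1]
  apply Finset.sum_nbij' (i := Prod.swap) (j := Prod.swap)
  · intro p hp; simp only [mem_filter, mem_univ, true_and] at *; exact hp
  · intro p hp; simp only [mem_filter, mem_univ, true_and] at *; exact hp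
  · intro p _; simp
  · intro p _; simp
  · intro p _; exact hamming_comm _ _

lemma sum_ordered_col {m n : ℕ} (P : Fin m → Fin n → Bool) :
    ∑ p : Fin m × Fin m, hamming (P p.1) (P p.2)
      = ∑ k : Fin n, 2 * (colCount P k * (m - colCount P k)) := by
  have hham : ∀ (a b : Fin m), hamming (P a) (P b) = ∑ k : Fin n, if P a k ≠ P b k then 1 else 0 := by
    intro a b; exact Finset.card_filter _ _
  calc ∑ p : Fin m × Fin m, hamming (P p.1) (P p.2)
      = ∑ p : Fin m × Fin m, ∑ k : Fin n, (if P p.1 k ≠ P p.2 k then 1 else 0) := by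
        exact Finset.sum_congr rfl (fun p _ => hham p.1 p.2)
    _ = ∑ k : Fin n, ∑ p : Fin m × Fin m, (if P p.1 k ≠ P p.2 k then 1 else 0) := Finset.sum_comm
    _ = ∑ k : Fin n, 2 * (colCount P k * (m - colCount P k)) := by
        apply Finset.sum_congr rfl
        intro k _
        have hcard : (univ.filter (fun j : Fin m => P j k = true)).card = colCount P k := rfl
        have hfalse : (univ.filter (fun j : Fin m => ¬ P j k = true)).card = m - colCount P k := by
          have := Finset.card_filter_add_card_filter_not (s := (univ : Finset (Fin m)))
            (p := fun j : Fin m => P j k = true)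
          simp only [Finset.card_univ, Fintype.card_fin] at this
          omega
        rw [Fintype.sum_prod_type]
        have hinner : ∀ a : Fin m, (∑ b : Fin m, if P a k ≠ P b k then 1 else 0)
            = if P a k = true then m - colCount P k else colCount P k := by
          intro a
          by_cases ha : P a k = true
          · rw [if_pos ha, ← hfalse, Finset.card_filter]
            apply Finset.sum_congr rfl
            intro b _
            cases hb : P b k <;> simp [ha, hb]
          · rw [if_neg ha, ← hcard, Finset.card_filter]
            apply Finset.sum_congr rfl
            intro b _
            have ha' : P a k = false := by simpa using ha
            cases hb : P b k <;> simp [ha', hb]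
        rw [Finset.sum_congr rfl (fun a _ => hinner a)]
        rw [Finset.sum_ite, Finset.sum_const, Finset.sum_const, hcard, hfalse]
        ring

lemma totalHamming_eq {m n : ℕ} (P : Fin m → Fin n → Bool) :
    totalHamming P = ∑ k : Fin n, colCount P k * (m - colCount P k) := by
  have h1 := sum_ordered P
  have h2 := sum_ordered_col P
  rw [h1, ← Finset.mul_sum] at h2
  omega


lemma L1 (d : ℕ) : (d+4) * (2*d+4 - (d+4)) < (d+3) * (2*d+4 - (d+3)) := by
  rw [show 2*d+4 - (d+4) = d from by omega, show 2*d+4 - (d+3) = d+1 from by omega]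
  nlinarith

lemma L2 (d : ℕ) : d * (2*d+4 - d) < (d+1) * (2*d+4 - (d+1)) := by
  rw [show 2*d+4 - d = d+4 from by omega, show 2*d+4 - (d+1) = d+3 from by omega]
  nlinarith

lemma L3 (d : ℕ) : (d+1) * (2*d+4 - (d+1)) < (d+2) * (2*d+4 - (d+2)) := by
  rw [show 2*d+4 - (d+1) = d+3 from by omega, show 2*d+4 - (d+2) = d+2 from by omega]
  nlinarith

lemma L4 (d : ℕ) : (d+3) * (2*d+4 - (d+3)) < (d+2) * (2*d+4 - (d+2)) := by
  rw [show 2*d+4 - (d+3) = d+1 from by omega, show 2*d+4 - (d+2) = d+2 from by omega]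
  nlinarith

theorem stmt15 (n : ℕ) (hn : Odd n) (x : Fin (n + 1) → Fin n → Bool)
    (hlevels : ∀ j : Fin (n + 1), onesCount (x j) = j)
    (hot cold : Fin n) (hne : hot ≠ cold)
    (hhot : colCount x hot = (n + 3) / 2) (hcold : colCount x cold = (n - 1) / 2)
    (hbal : ∀ k : Fin n, k ≠ hot → k ≠ cold → colCount x k = (n + 1) / 2)
    (i : Fin (n + 1)) (hic : x i cold = true) (hih : x i hot = false)
    (y : Fin n → Bool) (hy : onesCount y = i) (hyne : y ≠ x i) :
    totalHamming (Function.update x i y) < totalHamming x := by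
  classical
  have hn3 : 3 ≤ n := by
    rcases hn with ⟨t, ht⟩
    by_contra h
    have h1 : n = 1 := by omega
    subst h1
    exact hne (Subsingleton.elim hot cold)
  obtain ⟨d, hd⟩ : ∃ d, n = 2 * d + 3 := by
    rcases hn with ⟨t, ht⟩; exact ⟨t - 1, by omega⟩
  have hn1 : n + 1 = 2 * d + 4 := by omega
  rw [totalHamming_eq, totalHamming_eq]
  set S : Fin n → ℕ := fun k => ∑ j ∈ univ \ {i}, (if x j k = true then 1 else 0) with hSdef
  have hm : ∀ k, colCount x k = S k + (if x i k = true then 1 else 0) := by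
    intro k
    rw [colCount, Finset.card_filter]
    exact Finset.sum_eq_sum_sdiff_singleton_add (mem_univ i) _
  have hm' : ∀ k, colCount (Function.update x i y) k = S k + (if y k = true then 1 else 0) := by
    intro k
    rw [colCount, Finset.card_filter]
    have h2 : (fun j => if Function.update x i y j k = true then (1:ℕ) else 0)
        = Function.update (fun j => if x j k = true then (1:ℕ) else 0) i (if y k = true then 1 else 0) := by
      funext j
      by_cases hj : j = i
      · subst hj; simp
      · simp [Function.update_of_ne hj]
    rw [h2, Finset.sum_update_of_mem (mem_univ i), add_comm]
  have hShot : S hot = d + 3 := by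
    have h := hm hot; rw [hhot, hih] at h; simp at h; omega
  have hScold : S cold = d := by
    have h := hm cold; rw [hcold, hic] at h; simp at h; omega
  have hSbal : ∀ k, k ≠ hot → k ≠ cold → S k + (if x i k = true then 1 else 0) = d + 2 := by
    intro k h1 h2; rw [← hm k, hbal k h1 h2]; omega
  -- value of the new column count, depending on y k
  have hvF : ∀ k, y k = false → colCount (Function.update x i y) k = S k := by
    intro k hk; rw [hm' k, hk]; norm_num
  have hvT : ∀ k, y k = true → colCount (Function.update x i y) k = S k + 1 := by
    intro k hk; rw [hm' k, hk]; norm_num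
  have hle : ∀ k : Fin n,
      colCount (Function.update x i y) k * (n + 1 - colCount (Function.update x i y) k)
        ≤ colCount x k * (n + 1 - colCount x k) := by
    intro k
    by_cases hk1 : k = hot
    · subst hk1
      have hxv : colCount x k = d + 3 := by rw [hhot]; omega
      cases hyk : y k
      · rw [hxv, hvF k hyk, hShot]
      · rw [hxv, hvT k hyk, hShot, hn1]
        exact (L1 d).le
    · by_cases hk2 : k = cold
      · subst hk2
        have hxv : colCount x k = d + 1 := by rw [hcold]; omega
        cases hyk : y k
        · rw [hxv, hvF k hyk, hScold, hn1]
          exact (L2 d).le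
        · rw [hxv, hvT k hyk, hScold]
      · have hxv : colCount x k = d + 2 := by rw [hbal k hk1 hk2]; omega
        have hb := hSbal k hk1 hk2
        cases hxk : x i k <;> rw [hxk] at hb <;> norm_num at hb
        · -- x i k = false, S k = d + 2
          cases hyk : y k
          · rw [hxv, hvF k hyk, hb]
          · rw [hxv, hvT k hyk, hb, hn1]
            exact (L4 d).le
        · -- x i k = true, S k = d + 1
          cases hyk : y k
          · rw [hxv, hvF k hyk, hb, hn1]
            exact (L3 d).le
          · rw [hxv, hvT k hyk, hb]
  have hstrict : ∃ k : Fin n,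
      colCount (Function.update x i y) k * (n + 1 - colCount (Function.update x i y) k)
        < colCount x k * (n + 1 - colCount x k) := by
    by_cases hbd : ∃ k, k ≠ hot ∧ k ≠ cold ∧ y k ≠ x i k
    · obtain ⟨k, h1, h2, h3⟩ := hbd
      refine ⟨k, ?_⟩
      have hxv : colCount x k = d + 2 := by rw [hbal k h1 h2]; omega
      have hb := hSbal k h1 h2
      cases hxk : x i k <;> rw [hxk] at hb <;> norm_num at hb
      · -- x i k = false, so y k = true
        have hyk : y k = true := by
          cases hyk : y k
          · exact absurd (by rw [hyk, hxk]) h3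
          · rfl
        rw [hxv, hvT k hyk, hb, hn1]
        exact L4 d
      · have hyk : y k = false := by
          cases hyk : y k
          · rfl
          · exact absurd (by rw [hyk, hxk]) h3
        rw [hxv, hvF k hyk, hb, hn1]
        exact L3 d
    · push_neg at hbd
      have hyhot : y hot = true := by
        cases hyh : y hot
        · exfalso
          have e1 : onesCount y = ∑ k : Fin n, (if y k = true then (1:ℕ) else 0) :=
            Finset.card_filter _ _
          have e2 : onesCount (x i) = ∑ k : Fin n, (if x i k = true then (1:ℕ) else 0) :=
            Finset.card_filter _ _
          have hsum : (∑ k : Fin n, (if y k = true then (1:ℕ) else 0))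
              = ∑ k : Fin n, (if x i k = true then (1:ℕ) else 0) := by
            rw [← e1, ← e2, hy, hlevels i]
          rw [Finset.sum_eq_sum_sdiff_singleton_add (mem_univ cold)
                (fun k => if y k = true then (1:ℕ) else 0),
              Finset.sum_eq_sum_sdiff_singleton_add (mem_univ cold)
                (fun k => if x i k = true then (1:ℕ) else 0)] at hsum
          have hrest : ∑ k ∈ univ \ {cold}, (if y k = true then (1:ℕ) else 0)
              = ∑ k ∈ univ \ {cold}, (if x i k = true then (1:ℕ) else 0) := by
            apply Finset.sum_congr rfl
            intro k hk
            have hk2 : k ≠ cold := by simp at hk; exact hk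
            by_cases hk1 : k = hot
            · subst hk1; rw [hyh, hih]
            · rw [hbd k hk1 hk2]
          rw [hrest, hic] at hsum
          have hycold : y cold = true := by
            cases hyc : y cold
            · rw [hyc] at hsum; simp at hsum
            · rfl
          apply hyne
          funext k
          by_cases hk1 : k = hot
          · subst hk1; rw [hyh, hih]
          · by_cases hk2 : k = cold
            · subst hk2; rw [hycold, hic]
            · exact hbd k hk1 hk2
        · rfl
      refine ⟨hot, ?_⟩
      have hxv : colCount x hot = d + 3 := by rw [hhot]; omega
      rw [hxv, hvT hot hyhot, hShot, hn1]
      exact L1 d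
  obtain ⟨k0, hk0⟩ := hstrict
  exact Finset.sum_lt_sum (fun k _ => hle k) ⟨k0, mem_univ k0, hk0⟩
end

section
/- In an almost balanced population P (n odd), with x_i having a zero-bit in the cold position and a one-bit in the hot position, let x̃_i differ from x_i exactly in the hot and cold positions, and let S_0, S_1 be the zero- and one-positions of x̃_i. A bit string y with |y| = i, y ≠ x̃_i, replaces x_i without decreasing the total Hamming distance if and only if y has exactly one one-bit in S_0 and exactly one zero-bit in S_1; any such replacement leaves the total Hamming distance unchanged. -/
open Finset

lemma pairCount {m : ℕ} (f : Fin m → Bool) :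
    ((univ.filter (fun p : Fin m × Fin m => p.1 < p.2)).filter (fun p => f p.1 ≠ f p.2)).card
      = (univ.filter (fun j => f j = true)).card * (univ.filter (fun j => f j = false)).card := by
  rw [← Finset.card_product]
  apply Finset.card_bij' (fun p _ => if f p.1 then p else p.swap)
    (fun q _ => if q.1 < q.2 then q else q.swap)
  case hi =>
    intro p hp
    simp only [mem_filter, mem_univ, true_and, mem_product] at hp ⊢
    obtain ⟨hlt, hne⟩ := hp
    cases hb1 : f p.1 <;> cases hb2 : f p.2 <;> simp_all
  case hj =>
    intro q hq
    simp only [mem_filter, mem_univ, true_and, mem_product] at hq ⊢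
    obtain ⟨h1, h2⟩ := hq
    have hne : q.1 ≠ q.2 := by intro h; rw [h, h2] at h1; exact Bool.noConfusion h1
    rcases lt_or_gt_of_ne hne with h | h
    · simp [h, h1, h2]
    · simp [not_lt_of_gt h, h, h1, h2]
  case left_inv =>
    intro p hp
    simp only [mem_filter, mem_univ, true_and] at hp
    obtain ⟨hlt, hne⟩ := hp
    cases hb : f p.1
    · simp [hb, not_lt_of_gt hlt]
    · simp [hb, hlt]
  case right_inv =>
    intro q hq
    simp only [mem_filter, mem_univ, true_and, mem_product] at hq
    obtain ⟨h1, h2⟩ := hq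
    by_cases h : q.1 < q.2
    · simp [h, h1]
    · simp [h, h2]

lemma colCount_le {m n : ℕ} (P : Fin m → Fin n → Bool) (k : Fin n) : colCount P k ≤ m := by
  unfold colCount
  calc _ ≤ (univ : Finset (Fin m)).card := card_filter_le _ _
  _ = m := by simp

lemma colCount_update {m n : ℕ} (x : Fin m → Fin n → Bool) (i : Fin m) (y : Fin n → Bool)
    (k : Fin n) :
    colCount (Function.update x i y) k + (if x i k = true then 1 else 0)
      = colCount x k + (if y k = true then 1 else 0) := by
  unfold colCount
  rw [Finset.card_filter, Finset.card_filter]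
  rw [← Finset.sum_erase_add _ _ (mem_univ i), ← Finset.sum_erase_add _ _ (mem_univ i)]
  have h : ∀ j ∈ univ.erase i,
      (if Function.update x i y j k = true then 1 else 0) = (if x j k = true then 1 else 0) := by
    intro j hj
    rw [Function.update_of_ne (mem_erase.1 hj).1]
  rw [Finset.sum_congr rfl h, Function.update_self]
  omega

theorem stmt17 (n : ℕ) (hn : Odd n) (x : Fin (n + 1) → Fin n → Bool)
    (hlevels : ∀ j : Fin (n + 1), onesCount (x j) = j)
    (hot cold : Fin n) (hne : hot ≠ cold)
    (hhot : colCount x hot = (n + 3) / 2) (hcold : colCount x cold = (n - 1) / 2)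
    (hbal : ∀ k : Fin n, k ≠ hot → k ≠ cold → colCount x k = (n + 1) / 2)
    (i : Fin (n + 1)) (hic : x i cold = false) (hih : x i hot = true)
    (xt : Fin n → Bool)
    (hxt : xt = fun k => if k = hot ∨ k = cold then !(x i k) else x i k)
    (S0 S1 : Finset (Fin n))
    (hS0 : S0 = Finset.univ.filter (fun k => xt k = false))
    (hS1 : S1 = Finset.univ.filter (fun k => xt k = true))
    (y : Fin n → Bool) (hy : onesCount y = i) (hyt : y ≠ xt) :
    (totalHamming x ≤ totalHamming (Function.update x i y) ↔
        (S0.filter (fun k => y k = true)).card = 1 ∧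
          (S1.filter (fun k => y k = false)).card = 1) ∧
      ((S0.filter (fun k => y k = true)).card = 1 ∧
          (S1.filter (fun k => y k = false)).card = 1 →
        totalHamming (Function.update x i y) = totalHamming x) := by
  obtain ⟨t, ht⟩ := hn
  have hnt : n = 2 * t + 1 := by omega
  subst hnt
  clear ht
  set U := Function.update x i y with hU
  -- basic facts about xt
  have hxt_hot : xt hot = false := by simp [hxt, hih]
  have hxt_cold : xt cold = true := by simp [hxt, hic, hne]
  have hxt_other : ∀ k : Fin (2 * t + 1), k ≠ hot → k ≠ cold → xt k = x i k := by
    intro k h1 h2; simp [hxt, h1, h2]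
  -- clean column counts
  have hChot : colCount x hot = t + 2 := by omega
  have hCcold : colCount x cold = t := by omega
  have hCbal : ∀ k : Fin (2 * t + 1), k ≠ hot → k ≠ cold → colCount x k = t + 1 := by
    intro k h1 h2; have := hbal k h1 h2; omega
  -- abbreviations
  set a := (S0.filter (fun k => y k = true)).card with ha_def
  set b := (S1.filter (fun k => y k = false)).card with hb_def
  -- onesCount xt = i
  have honesxt : onesCount xt = (i : ℕ) := by
    have hi := hlevels i
    unfold onesCount at hi ⊢
    rw [Finset.card_filter] at hi ⊢
    have key : ∀ k : Fin (2 * t + 1),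
        ((if xt k = true then 1 else 0) : ℤ) + (if k = hot then 1 else 0)
          = (if x i k = true then 1 else 0) + (if k = cold then 1 else 0) := by
      intro k
      by_cases h1 : k = hot
      · subst h1; simp [hxt_hot, hih, hne]
      · by_cases h2 : k = cold
        · subst h2; simp [hxt_cold, hic, h1]
        · simp [hxt_other k h1 h2, h1, h2]
    have hsum : (∑ k : Fin (2 * t + 1), ((if xt k = true then 1 else 0) : ℤ))
        + (∑ k : Fin (2 * t + 1), ((if k = hot then 1 else 0) : ℤ))
        = (∑ k : Fin (2 * t + 1), ((if x i k = true then 1 else 0) : ℤ))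
        + (∑ k : Fin (2 * t + 1), ((if k = cold then 1 else 0) : ℤ)) := by
      rw [← Finset.sum_add_distrib, ← Finset.sum_add_distrib]
      exact Finset.sum_congr rfl fun k _ => key k
    simp only [Finset.sum_ite_eq', Finset.mem_univ, if_true] at hsum
    have c1 : ((∑ k : Fin (2 * t + 1), if xt k = true then 1 else 0 : ℕ) : ℤ)
        = ∑ k : Fin (2 * t + 1), ((if xt k = true then 1 else 0) : ℤ) := by push_cast; rfl
    have c2 : ((∑ k : Fin (2 * t + 1), if x i k = true then 1 else 0 : ℕ) : ℤ)
        = ∑ k : Fin (2 * t + 1), ((if x i k = true then 1 else 0) : ℤ) := by push_cast; rfl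
    omega
  -- S1.card = i
  have hS1card : S1.card = (i : ℕ) := by rw [hS1]; exact honesxt
  -- a = b
  have hab : a = b := by
    have hsplit : univ.filter (fun k => y k = true)
        = (univ.filter (fun k => xt k = false ∧ y k = true))
          ∪ (univ.filter (fun k => xt k = true ∧ y k = true)) := by
      ext k
      simp only [mem_filter, mem_union, mem_univ, true_and]
      cases h : xt k <;> simp
    have hdisj : Disjoint (univ.filter (fun k : Fin (2*t+1) => xt k = false ∧ y k = true))
        (univ.filter (fun k => xt k = true ∧ y k = true)) := by
      rw [Finset.disjoint_left]
      intro k h1 h2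
      simp only [mem_filter] at h1 h2
      rw [h1.2.1] at h2; exact Bool.noConfusion h2.2.1
    have hA : a + (S1.filter (fun k => y k = true)).card = (i : ℕ) := by
      have := hy
      unfold onesCount at this
      rw [hsplit, Finset.card_union_of_disjoint hdisj] at this
      rw [ha_def, hS0, hS1, filter_filter, filter_filter]
      omega
    have hB : (S1.filter (fun k => y k = true)).card + b = S1.card := by
      rw [hb_def]
      have h := Finset.card_filter_add_card_filter_not
        (s := S1) (p := fun k => y k = true)
      simp only [Bool.not_eq_true] at h
      omega
    omega
  -- a ≥ 1
  have ha1 : 1 ≤ a := by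
    rcases Nat.eq_zero_or_pos a with h0 | h; swap
    · exact h
    exfalso
    have hb0 : b = 0 := by omega
    apply hyt
    have hS0e : S0.filter (fun k => y k = true) = ∅ := Finset.card_eq_zero.mp h0
    have hS1e : S1.filter (fun k => y k = false) = ∅ := Finset.card_eq_zero.mp hb0
    funext k
    cases hxk : xt k
    · by_contra hcon
      have hyk : y k = true := by revert hcon; cases y k <;> simp
      have : k ∈ S0.filter (fun k => y k = true) := by
        rw [hS0]; simp [hxk, hyk]
      rw [hS0e] at this; exact absurd this (Finset.notMem_empty k)
    · by_contra hcon
      have hyk : y k = false := by revert hcon; cases y k <;> simp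
      have : k ∈ S1.filter (fun k => y k = false) := by
        rw [hS1]; simp [hxk, hyk]
      rw [hS1e] at this; exact absurd this (Finset.notMem_empty k)
  -- the key identity
  have hkey : (totalHamming U : ℤ) + a + b = totalHamming x + 2 := by
    have key : ∀ k : Fin (2 * t + 1),
        ((colCount U k * (2 * t + 1 + 1 - colCount U k) : ℕ) : ℤ)
            + (if xt k = false ∧ y k = true then 1 else 0)
            + (if xt k = true ∧ y k = false then 1 else 0)
          = ((colCount x k * (2 * t + 1 + 1 - colCount x k) : ℕ) : ℤ)
            + (if k = hot then 1 else 0) + (if k = cold then 1 else 0) := by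
      intro k
      have hupd := colCount_update x i y k
      rw [← hU] at hupd
      by_cases h1 : k = hot
      · subst h1
        cases hyb : y k
        · have hC' : colCount U k = t + 1 := by
            rw [hih, hyb] at hupd; simp at hupd; omega
          rw [hC', hChot]
          have e1 : 2 * t + 1 + 1 - (t + 1) = t + 1 := by omega
          have e2 : 2 * t + 1 + 1 - (t + 2) = t := by omega
          rw [e1, e2]
          simp [hxt_hot, hyb, hne]
          ring
        · have hC' : colCount U k = t + 2 := by
            rw [hih, hyb] at hupd; simp at hupd; omega
          rw [hC', hChot]
          simp [hxt_hot, hyb, hne]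
      · by_cases h2 : k = cold
        · subst h2
          cases hyb : y k
          · have hC' : colCount U k = t := by
              rw [hic, hyb] at hupd; simp at hupd; omega
            rw [hC', hCcold]
            simp [hxt_cold, hyb, h1]
          · have hC' : colCount U k = t + 1 := by
              rw [hic, hyb] at hupd; simp at hupd; omega
            rw [hC', hCcold]
            have e1 : 2 * t + 1 + 1 - (t + 1) = t + 1 := by omega
            have e2 : 2 * t + 1 + 1 - t = t + 2 := by omega
            rw [e1, e2]
            simp [hxt_cold, hyb, h1]
            ring
        · have hxx := hxt_other k h1 h2
          have hC := hCbal k h1 h2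
          cases hxb : x i k
          · cases hyb : y k
            · have hC' : colCount U k = t + 1 := by
                rw [hxb, hyb] at hupd; simp at hupd; omega
              rw [hC', hC]
              simp [hxx, hxb, hyb, h1, h2]
            · have hC' : colCount U k = t + 2 := by
                rw [hxb, hyb] at hupd; simp at hupd; omega
              rw [hC', hC]
              have e1 : 2 * t + 1 + 1 - (t + 2) = t := by omega
              have e2 : 2 * t + 1 + 1 - (t + 1) = t + 1 := by omega
              rw [e1, e2]
              simp [hxx, hxb, hyb, h1, h2]
              ring
          · cases hyb : y k
            · have hC' : colCount U k = t := by
                rw [hxb, hyb] at hupd; simp at hupd; omega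
              rw [hC', hC]
              have e1 : 2 * t + 1 + 1 - t = t + 2 := by omega
              have e2 : 2 * t + 1 + 1 - (t + 1) = t + 1 := by omega
              rw [e1, e2]
              simp [hxx, hxb, hyb, h1, h2]
              ring
            · have hC' : colCount U k = t + 1 := by
                rw [hxb, hyb] at hupd; simp at hupd; omega
              rw [hC', hC]
              simp [hxx, hxb, hyb, h1, h2]
    have hsum : (∑ k : Fin (2 * t + 1), ((colCount U k * (2 * t + 1 + 1 - colCount U k) : ℕ) : ℤ))
        + (∑ k : Fin (2 * t + 1), ((if xt k = false ∧ y k = true then 1 else 0) : ℤ))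
        + (∑ k : Fin (2 * t + 1), ((if xt k = true ∧ y k = false then 1 else 0) : ℤ))
        = (∑ k : Fin (2 * t + 1), ((colCount x k * (2 * t + 1 + 1 - colCount x k) : ℕ) : ℤ))
        + (∑ k : Fin (2 * t + 1), ((if k = hot then 1 else 0) : ℤ))
        + (∑ k : Fin (2 * t + 1), ((if k = cold then 1 else 0) : ℤ)) := by
      rw [← Finset.sum_add_distrib, ← Finset.sum_add_distrib,
        ← Finset.sum_add_distrib, ← Finset.sum_add_distrib]
      exact Finset.sum_congr rfl fun k _ => key k
    simp only [Finset.sum_ite_eq', Finset.mem_univ, if_true] at hsum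
    have hTU : (totalHamming U : ℤ)
        = ∑ k : Fin (2 * t + 1), ((colCount U k * (2 * t + 1 + 1 - colCount U k) : ℕ) : ℤ) := by
      rw [totalHamming_eq U, Nat.cast_sum]
    have hTx : (totalHamming x : ℤ)
        = ∑ k : Fin (2 * t + 1), ((colCount x k * (2 * t + 1 + 1 - colCount x k) : ℕ) : ℤ) := by
      rw [totalHamming_eq x, Nat.cast_sum]
    have haz : (a : ℤ)
        = ∑ k : Fin (2 * t + 1), ((if xt k = false ∧ y k = true then 1 else 0) : ℤ) := by
      rw [ha_def, hS0, filter_filter, Finset.card_filter]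
      push_cast
      rfl
    have hbz : (b : ℤ)
        = ∑ k : Fin (2 * t + 1), ((if xt k = true ∧ y k = false then 1 else 0) : ℤ) := by
      rw [hb_def, hS1, filter_filter, Finset.card_filter]
      push_cast
      rfl
    rw [hTU, hTx, haz, hbz]
    linarith
  refine ⟨⟨fun hle => ?_, fun hc => ?_⟩, fun hc => ?_⟩
  · have : (totalHamming x : ℤ) ≤ (totalHamming U : ℤ) := by exact_mod_cast hle
    omega
  · obtain ⟨h1, h2⟩ := hc
    omega
  · obtain ⟨h1, h2⟩ := hc
    omega
end

section
/- Let x_{i+1} be a bit string with i+1 ones and let V be the set of n - i bit strings each having i ones, obtained from a fixed string x_i (with i ones, one of them at a designated hot position h) by flipping the bit at h and one zero-bit of x_i. Then x_{i+1} has Hamming distance 1 to at most two elements of V, and Hamming distance at least 3 to every other element of V. -/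
lemma hamming_eq_sdiff {n : ℕ} (z v : Fin n → Bool) :
    hamming z v = ((Finset.univ.filter (fun k => z k = true)) \
        (Finset.univ.filter (fun k => v k = true))).card
      + ((Finset.univ.filter (fun k => v k = true)) \
        (Finset.univ.filter (fun k => z k = true))).card := by
  rw [hamming, ← Finset.card_union_of_disjoint disjoint_sdiff_sdiff]
  congr 1
  ext p
  simp only [Finset.mem_filter, Finset.mem_union, Finset.mem_sdiff, Finset.mem_univ, true_and]
  cases hzp : z p <;> cases hvp : v p <;> simp

/-- if onesCount z = onesCount v + 1 then hamming is odd and =1 forces ones of v ⊆ ones of z -/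
lemma hamming_key {n : ℕ} (z v : Fin n → Bool) (i : ℕ)
    (hz : onesCount z = i + 1) (hv : onesCount v = i) :
    (hamming z v ≠ 1 → 3 ≤ hamming z v) ∧
      (hamming z v = 1 → ∀ p, v p = true → z p = true) := by
  set A := Finset.univ.filter (fun k => z k = true) with hA
  set B := Finset.univ.filter (fun k => v k = true) with hB
  have h1 : (A \ B).card + (A ∩ B).card = A.card := Finset.card_sdiff_add_card_inter A B
  have h2 : (B \ A).card + (A ∩ B).card = B.card := by
    rw [Finset.inter_comm]; exact Finset.card_sdiff_add_card_inter B A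
  have hAc : A.card = i + 1 := hz
  have hBc : B.card = i := hv
  have hham : hamming z v = (A \ B).card + (B \ A).card := hamming_eq_sdiff z v
  constructor
  · intro hne; omega
  · intro h1' p hp
    have hBA : (B \ A).card = 0 := by omega
    have hsub : B ⊆ A := by
      rw [Finset.card_eq_zero, Finset.sdiff_eq_empty_iff_subset] at hBA
      exact hBA
    have : p ∈ B := by simp [hB, hp]
    have := hsub this
    simpa [hA] using this

theorem stmt19 (n i : ℕ) (x : Fin n → Bool) (h : Fin n)
    (hx : x h = true) (hones : onesCount x = i)
    (V : Set (Fin n → Bool))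
    (hV : V = {v | ∃ k, x k = false ∧ v = Function.update (Function.update x h false) k true})
    (z : Fin n → Bool) (hz : onesCount z = i + 1) :
    Set.ncard {v ∈ V | hamming z v = 1} ≤ 2 ∧
      ∀ v ∈ V, hamming z v ≠ 1 → 3 ≤ hamming z v := by
  have hmem : ∀ v ∈ V, ∃ k, x k = false ∧
      v = Function.update (Function.update x h false) k true := by
    intro v hv; rw [hV] at hv; exact hv
  have hhx : h ∈ Finset.univ.filter (fun k => x k = true) := by simp [hx]
  have hione : 1 ≤ i := by
    rw [← hones, onesCount]
    exact Finset.card_pos.mpr ⟨h, hhx⟩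
  -- value of updated functions
  have happ : ∀ (k p : Fin n), x k = false →
      Function.update (Function.update x h false) k true p =
        if p = k then true else if p = h then false else x p := by
    intro k p hk
    simp [Function.update_apply]
  have hkh : ∀ k : Fin n, x k = false → k ≠ h := by
    intro k hk e; rw [e, hx] at hk; exact absurd hk (by simp)
  -- onesCount of elements of V
  have honesv : ∀ k, x k = false →
      onesCount (Function.update (Function.update x h false) k true) = i := by
    intro k hk
    have hknh := hkh k hk
    have hfilter : Finset.univ.filter
        (fun p => Function.update (Function.update x h false) k true p = true)
        = insert k ((Finset.univ.filter (fun p => x p = true)).erase h) := by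
      ext p
      simp only [Finset.mem_filter, Finset.mem_univ, true_and, Finset.mem_insert,
        Finset.mem_erase, happ k p hk]
      rcases eq_or_ne p k with rfl | hpk
      · simp
      · rcases eq_or_ne p h with rfl | hph
        · simp [hpk, hx]
        · simp [hpk, hph]
    have hkni : k ∉ (Finset.univ.filter (fun p => x p = true)).erase h := by
      simp [hk]
    rw [onesCount, hfilter, Finset.card_insert_of_notMem hkni,
      Finset.card_erase_of_mem hhx]
    have : (Finset.univ.filter (fun p => x p = true)).card = i := hones
    omega
  refine ⟨?_, ?_⟩
  · -- at most two elements at distance 1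
    by_contra hcon
    push_neg at hcon
    rw [Set.two_lt_ncard_iff (Set.toFinite _)] at hcon
    obtain ⟨a, b, c, ha, hb, hc, hab, hac, hbc⟩ := hcon
    obtain ⟨haV, ha1⟩ := ha
    obtain ⟨hbV, hb1⟩ := hb
    obtain ⟨hcV, hc1⟩ := hc
    obtain ⟨k₁, hk₁, rfl⟩ := hmem a haV
    obtain ⟨k₂, hk₂, rfl⟩ := hmem b hbV
    obtain ⟨k₃, hk₃, rfl⟩ := hmem c hcV
    have hk12 : k₁ ≠ k₂ := fun e => hab (by rw [e])
    have hk13 : k₁ ≠ k₃ := fun e => hac (by rw [e])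
    have hk23 : k₂ ≠ k₃ := fun e => hbc (by rw [e])
    -- each ones-set is contained in ones of z
    have hsub1 := (hamming_key z _ i hz (honesv k₁ hk₁)).2 ha1
    have hsub2 := (hamming_key z _ i hz (honesv k₂ hk₂)).2 hb1
    have hsub3 := (hamming_key z _ i hz (honesv k₃ hk₃)).2 hc1
    have hzk₁ : z k₁ = true := hsub1 k₁ (by rw [happ k₁ k₁ hk₁]; simp)
    have hzk₂ : z k₂ = true := hsub2 k₂ (by rw [happ k₂ k₂ hk₂]; simp)
    have hzk₃ : z k₃ = true := hsub3 k₃ (by rw [happ k₃ k₃ hk₃]; simp)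
    have hzx : ∀ p, p ≠ h → x p = true → z p = true := by
      intro p hph hp
      have hpk : p ≠ k₁ := fun e => by rw [e, hk₁] at hp; exact absurd hp (by simp)
      exact hsub1 p (by rw [happ k₁ p hk₁]; simp [hpk, hph, hp])
    -- card contradiction
    have hsubz : insert k₁ (insert k₂ (insert k₃
        ((Finset.univ.filter (fun p => x p = true)).erase h)))
        ⊆ Finset.univ.filter (fun p => z p = true) := by
      intro p hp
      simp only [Finset.mem_insert, Finset.mem_erase, Finset.mem_filter,
        Finset.mem_univ, true_and] at hp ⊢
      rcases hp with rfl | rfl | rfl | ⟨hph, hp⟩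
      · exact hzk₁
      · exact hzk₂
      · exact hzk₃
      · exact hzx p hph hp
    have hcard := Finset.card_le_card hsubz
    have hc3 : k₃ ∉ (Finset.univ.filter (fun p => x p = true)).erase h := by simp [hk₃]
    have hc2 : k₂ ∉ insert k₃ ((Finset.univ.filter (fun p => x p = true)).erase h) := by
      simp [hk₂, hk23]
    have hc1' : k₁ ∉ insert k₂ (insert k₃
        ((Finset.univ.filter (fun p => x p = true)).erase h)) := by
      simp [hk₁, hk12, hk13]
    rw [Finset.card_insert_of_notMem hc1', Finset.card_insert_of_notMem hc2,
      Finset.card_insert_of_notMem hc3, Finset.card_erase_of_mem hhx] at hcard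
    have hxc : (Finset.univ.filter (fun p => x p = true)).card = i := hones
    have hzc : (Finset.univ.filter (fun p => z p = true)).card = i + 1 := hz
    omega
  · intro v hv hne
    obtain ⟨k, hk, rfl⟩ := hmem v hv
    exact (hamming_key z _ i hz (honesv k hk)).1 hne
end
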